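/- Let T be the set of coefficient vectors a : Fin 9 → ℝ such that the polynomial g_a := Σ_{i=0}^{8} a_i X^i ∈ ℝ[X] has degree exactly 8, its image in ℂ[X] is squarefree, and g_a has no real root. Let T⁺ := {a ∈ T | g_a(x) > 0 for all x ∈ ℝ} and T⁻ := {a ∈ T | g_a(x) < 0 for all x ∈ ℝ}. Then T = T⁺ ∪ T⁻ with T⁺ ∩ T⁻ = ∅; T⁺ and T⁻ are each nonempty and path-connected (in the Euclidean topology on Fin 9 → ℝ); and no continuous path inside T joins a point of T⁺ to a point of T⁻. Hence T has exactly two path components. -/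

import Mathlib

/-- The real polynomial `g_a = Σ_{i=0}^{8} a_i X^i` associated to a coefficient
vector `a : Fin 9 → ℝ` (the dehomogenization of the real binary octic form
`p_a(x₀,x₁) = Σ a_i x₀^i x₁^{8−i}`). -/
noncomputable def polyOf (a : Fin 9 → ℝ) : Polynomial ℝ :=
  ∑ i : Fin 9, Polynomial.C (a i) * Polynomial.X ^ (i : ℕ)

/-- `T`: coefficient vectors of smooth real binary octics of type 4, i.e. `g_a` has
degree exactly 8, is squarefree over `ℂ`, and has no real root. -/
def Tset : Set (Fin 9 → ℝ) :=
  {a | (polyOf a).degree = 8 ∧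
       Squarefree ((polyOf a).map (algebraMap ℝ ℂ)) ∧
       ∀ x : ℝ, (polyOf a).eval x ≠ 0}

/-- `T⁺`: the everywhere-positive members of `T`. -/
def Tplus : Set (Fin 9 → ℝ) := {a ∈ Tset | ∀ x : ℝ, 0 < (polyOf a).eval x}

/-- `T⁻`: the everywhere-negative members of `T`. -/
def Tminus : Set (Fin 9 → ℝ) := {a ∈ Tset | ∀ x : ℝ, (polyOf a).eval x < 0}

section Aux
open Polynomial Complex

set_option maxHeartbeats 1000000

lemma polyOf_coeff (a : Fin 9 → ℝ) (i : Fin 9) : (polyOf a).coeff i = a i := by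
  rw [polyOf, finset_sum_coeff]
  rw [Finset.sum_eq_single i]
  · simp
  · intro b _ hb
    simp [coeff_C_mul, coeff_X_pow, Fin.val_eq_val, hb.symm]
  · simp

lemma polyOf_injective : Function.Injective polyOf := by
  intro a b h
  funext i
  rw [← polyOf_coeff a i, ← polyOf_coeff b i, h]

lemma polyOf_eval_zero (a : Fin 9 → ℝ) : (polyOf a).eval 0 = a 0 := by
  rw [← coeff_zero_eq_eval_zero]
  exact polyOf_coeff a 0

lemma polyOf_leadingCoeff (a : Fin 9 → ℝ) (h : (polyOf a).degree = 8) :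
    (polyOf a).leadingCoeff = a 8 := by
  have : (polyOf a).natDegree = 8 := natDegree_eq_of_degree_eq_some h
  rw [leadingCoeff, this]
  exact polyOf_coeff a 8

noncomputable def oc0 (c : ℝ) (x y : Fin 4 → ℝ) : ℝ :=
  c * (x 0 ^ 2 * x 1 ^ 2 * x 2 ^ 2 * x 3 ^ 2 + x 0 ^ 2 * x 1 ^ 2 * x 2 ^ 2 * y 3 + x 0 ^ 2 * x 1 ^ 2 * x 3 ^ 2 * y 2 + x 0 ^ 2 * x 1 ^ 2 * y 2 * y 3 + x 0 ^ 2 * x 2 ^ 2 * x 3 ^ 2 * y 1 + x 0 ^ 2 * x 2 ^ 2 * y 1 * y 3 + x 0 ^ 2 * x 3 ^ 2 * y 1 * y 2 + x 0 ^ 2 * y 1 * y 2 * y 3 + x 1 ^ 2 * x 2 ^ 2 * x 3 ^ 2 * y 0 + x 1 ^ 2 * x 2 ^ 2 * y 0 * y 3 + x 1 ^ 2 * x 3 ^ 2 * y 0 * y 2 + x 1 ^ 2 * y 0 * y 2 * y 3 + x 2 ^ 2 * x 3 ^ 2 * y 0 * y 1 + x 2 ^ 2 * y 0 * y 1 * y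 3 + x 3 ^ 2 * y 0 * y 1 * y 2 + y 0 * y 1 * y 2 * y 3)

noncomputable def oc1 (c : ℝ) (x y : Fin 4 → ℝ) : ℝ :=
  c * ( - 2 * x 0 * x 1 ^ 2 * x 2 ^ 2 * x 3 ^ 2 - 2 * x 0 * x 1 ^ 2 * x 2 ^ 2 * y 3 - 2 * x 0 * x 1 ^ 2 * x 3 ^ 2 * y 2 - 2 * x 0 * x 1 ^ 2 * y 2 * y 3 - 2 * x 0 * x 2 ^ 2 * x 3 ^ 2 * y 1 - 2 * x 0 * x 2 ^ 2 * y 1 * y 3 - 2 * x 0 * x 3 ^ 2 * y 1 * y 2 - 2 * x 0 * y 1 * y 2 * y 3 - 2 * x 0 ^ 2 * x 1 * x 2 ^ 2 * x 3 ^ 2 - 2 * x 0 ^ 2 * x 1 * x 2 ^ 2 * y 3 - 2 * x 0 ^ 2 * x 1 * x 3 ^ 2 * y 2 - 2 * x 0 ^ 2 * x 1 * y 2 * y 3 - 2 * x 0 ^ 2 * x 1 ^ 2 * x 2 * x 3 ^ 2 - 2 * x 0 ^ 2 * x 1 ^ 2 * x 2 * y 3 - 2 * x 0 ^ 2 * x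 1 ^ 2 * x 2 ^ 2 * x 3 - 2 * x 0 ^ 2 * x 1 ^ 2 * x 3 * y 2 - 2 * x 0 ^ 2 * x 2 * x 3 ^ 2 * y 1 - 2 * x 0 ^ 2 * x 2 * y 1 * y 3 - 2 * x 0 ^ 2 * x 2 ^ 2 * x 3 * y 1 - 2 * x 0 ^ 2 * x 3 * y 1 * y 2 - 2 * x 1 * x 2 ^ 2 * x 3 ^ 2 * y 0 - 2 * x 1 * x 2 ^ 2 * y 0 * y 3 - 2 * x 1 * x 3 ^ 2 * y 0 * y 2 - 2 * x 1 * y 0 * y 2 * y 3 - 2 * x 1 ^ 2 * x 2 * x 3 ^ 2 * y 0 - 2 * x 1 ^ 2 * x 2 * y 0 * y 3 - 2 * x 1 ^ 2 * x 2 ^ 2 * x 3 * y 0 - 2 * x 1 ^ 2 * x 3 * y 0 * y 2 - 2 * x 2 * x 3 ^ 2 * y 0 * y 1 - 2 * x 2 * y 0 * y 1 * y 3 - 2 * x 2 ^ 2 * x 3 * y 0 * y 1 - 2 * x 3 * y 0 * y 1 * y 2)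

noncomputable def oc2 (c : ℝ) (x y : Fin 4 → ℝ) : ℝ :=
  c * (x 1 ^ 2 * x 2 ^ 2 * x 3 ^ 2 + x 1 ^ 2 * x 2 ^ 2 * y 3 + x 1 ^ 2 * x 3 ^ 2 * y 2 + x 1 ^ 2 * y 2 * y 3 + x 2 ^ 2 * x 3 ^ 2 * y 1 + x 2 ^ 2 * y 1 * y 3 + x 3 ^ 2 * y 1 * y 2 + y 1 * y 2 * y 3 + 4 * x 0 * x 1 * x 2 ^ 2 * x 3 ^ 2 + 4 * x 0 * x 1 * x 2 ^ 2 * y 3 + 4 * x 0 * x 1 * x 3 ^ 2 * y 2 + 4 * x 0 * x 1 * y 2 * y 3 + 4 * x 0 * x 1 ^ 2 * x 2 * x 3 ^ 2 + 4 * x 0 * x 1 ^ 2 * x 2 * y 3 + 4 * x 0 * x 1 ^ 2 * x 2 ^ 2 * x 3 + 4 * x 0 * x 1 ^ 2 * x 3 * y 2 + 4 * x 0 * x 2 * x 3 ^ 2 * y 1 + 4 * x 0 * x 2 * y 1 * y 3 + 4 * x 0 * x 2 ^ 2 * x 3 * y 1 + 4 * x 0 * x 3 * y 1 * y 2 + x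 0 ^ 2 * x 2 ^ 2 * x 3 ^ 2 + x 0 ^ 2 * x 2 ^ 2 * y 3 + x 0 ^ 2 * x 3 ^ 2 * y 2 + x 0 ^ 2 * y 2 * y 3 + 4 * x 0 ^ 2 * x 1 * x 2 * x 3 ^ 2 + 4 * x 0 ^ 2 * x 1 * x 2 * y 3 + 4 * x 0 ^ 2 * x 1 * x 2 ^ 2 * x 3 + 4 * x 0 ^ 2 * x 1 * x 3 * y 2 + x 0 ^ 2 * x 1 ^ 2 * x 3 ^ 2 + x 0 ^ 2 * x 1 ^ 2 * y 3 + 4 * x 0 ^ 2 * x 1 ^ 2 * x 2 * x 3 + x 0 ^ 2 * x 1 ^ 2 * x 2 ^ 2 + x 0 ^ 2 * x 1 ^ 2 * y 2 + x 0 ^ 2 * x 3 ^ 2 * y 1 + x 0 ^ 2 * y 1 * y 3 + 4 * x 0 ^ 2 * x 2 * x 3 * y 1 + x 0 ^ 2 * x 2 ^ 2 * y 1 + x 0 ^ 2 * y 1 * y 2 + x 2 ^ 2 * x 3 ^ 2 * y 0 + x 2 ^ 2 * y 0 * y 3 + x 3 ^ 2 * y 0 * y 2 + y 0 * y 2 *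 y 3 + 4 * x 1 * x 2 * x 3 ^ 2 * y 0 + 4 * x 1 * x 2 * y 0 * y 3 + 4 * x 1 * x 2 ^ 2 * x 3 * y 0 + 4 * x 1 * x 3 * y 0 * y 2 + x 1 ^ 2 * x 3 ^ 2 * y 0 + x 1 ^ 2 * y 0 * y 3 + 4 * x 1 ^ 2 * x 2 * x 3 * y 0 + x 1 ^ 2 * x 2 ^ 2 * y 0 + x 1 ^ 2 * y 0 * y 2 + x 3 ^ 2 * y 0 * y 1 + y 0 * y 1 * y 3 + 4 * x 2 * x 3 * y 0 * y 1 + x 2 ^ 2 * y 0 * y 1 + y 0 * y 1 * y 2)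

noncomputable def oc3 (c : ℝ) (x y : Fin 4 → ℝ) : ℝ :=
  c * ( - 2 * x 1 * x 2 ^ 2 * x 3 ^ 2 - 2 * x 1 * x 2 ^ 2 * y 3 - 2 * x 1 * x 3 ^ 2 * y 2 - 2 * x 1 * y 2 * y 3 - 2 * x 1 ^ 2 * x 2 * x 3 ^ 2 - 2 * x 1 ^ 2 * x 2 * y 3 - 2 * x 1 ^ 2 * x 2 ^ 2 * x 3 - 2 * x 1 ^ 2 * x 3 * y 2 - 2 * x 2 * x 3 ^ 2 * y 1 - 2 * x 2 * y 1 * y 3 - 2 * x 2 ^ 2 * x 3 * y 1 - 2 * x 3 * y 1 * y 2 - 2 * x 0 * x 2 ^ 2 * x 3 ^ 2 - 2 * x 0 * x 2 ^ 2 * y 3 - 2 * x 0 * x 3 ^ 2 * y 2 - 2 * x 0 * y 2 * y 3 - 8 * x 0 * x 1 * x 2 * x 3 ^ 2 - 8 * x 0 * x 1 * x 2 * y 3 - 8 * x 0 * x 1 * x 2 ^ 2 * x 3 - 8 * x 0 * x 1 * x 3 * y 2 - 2 * x 0 * x 1 ^ 2 * x 3 ^ 2 - 2 * x 0 * x 1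 ^ 2 * y 3 - 8 * x 0 * x 1 ^ 2 * x 2 * x 3 - 2 * x 0 * x 1 ^ 2 * x 2 ^ 2 - 2 * x 0 * x 1 ^ 2 * y 2 - 2 * x 0 * x 3 ^ 2 * y 1 - 2 * x 0 * y 1 * y 3 - 8 * x 0 * x 2 * x 3 * y 1 - 2 * x 0 * x 2 ^ 2 * y 1 - 2 * x 0 * y 1 * y 2 - 2 * x 0 ^ 2 * x 2 * x 3 ^ 2 - 2 * x 0 ^ 2 * x 2 * y 3 - 2 * x 0 ^ 2 * x 2 ^ 2 * x 3 - 2 * x 0 ^ 2 * x 3 * y 2 - 2 * x 0 ^ 2 * x 1 * x 3 ^ 2 - 2 * x 0 ^ 2 * x 1 * y 3 - 8 * x 0 ^ 2 * x 1 * x 2 * x 3 - 2 * x 0 ^ 2 * x 1 * x 2 ^ 2 - 2 * x 0 ^ 2 * x 1 * y 2 - 2 * x 0 ^ 2 * x 1 ^ 2 * x 3 - 2 * x 0 ^ 2 * x 1 ^ 2 * x 2 - 2 * x 0 ^ 2 * x 3 * y 1 - 2 * x 0 ^ 2 * x 2 * y 1 - 2 * x 2 * x 3 ^ 2 * y 0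 - 2 * x 2 * y 0 * y 3 - 2 * x 2 ^ 2 * x 3 * y 0 - 2 * x 3 * y 0 * y 2 - 2 * x 1 * x 3 ^ 2 * y 0 - 2 * x 1 * y 0 * y 3 - 8 * x 1 * x 2 * x 3 * y 0 - 2 * x 1 * x 2 ^ 2 * y 0 - 2 * x 1 * y 0 * y 2 - 2 * x 1 ^ 2 * x 3 * y 0 - 2 * x 1 ^ 2 * x 2 * y 0 - 2 * x 3 * y 0 * y 1 - 2 * x 2 * y 0 * y 1)

noncomputable def oc4 (c : ℝ) (x y : Fin 4 → ℝ) : ℝ :=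
  c * (x 2 ^ 2 * x 3 ^ 2 + x 2 ^ 2 * y 3 + x 3 ^ 2 * y 2 + y 2 * y 3 + 4 * x 1 * x 2 * x 3 ^ 2 + 4 * x 1 * x 2 * y 3 + 4 * x 1 * x 2 ^ 2 * x 3 + 4 * x 1 * x 3 * y 2 + x 1 ^ 2 * x 3 ^ 2 + x 1 ^ 2 * y 3 + 4 * x 1 ^ 2 * x 2 * x 3 + x 1 ^ 2 * x 2 ^ 2 + x 1 ^ 2 * y 2 + x 3 ^ 2 * y 1 + y 1 * y 3 + 4 * x 2 * x 3 * y 1 + x 2 ^ 2 * y 1 + y 1 * y 2 + 4 * x 0 * x 2 * x 3 ^ 2 + 4 * x 0 * x 2 * y 3 + 4 * x 0 * x 2 ^ 2 * x 3 + 4 * x 0 * x 3 * y 2 + 4 * x 0 * x 1 * x 3 ^ 2 + 4 * x 0 * x 1 * y 3 + 16 * x 0 * x 1 * x 2 * x 3 + 4 * x 0 * x 1 * x 2 ^ 2 + 4 * x 0 * x 1 * y 2 + 4 * x 0 * x 1 ^ 2 * x 3 + 4 * x 0 * x 1 ^ 2 * x 2 + 4 * x 0 * x 3 * y 1 + 4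 * x 0 * x 2 * y 1 + x 0 ^ 2 * x 3 ^ 2 + x 0 ^ 2 * y 3 + 4 * x 0 ^ 2 * x 2 * x 3 + x 0 ^ 2 * x 2 ^ 2 + x 0 ^ 2 * y 2 + 4 * x 0 ^ 2 * x 1 * x 3 + 4 * x 0 ^ 2 * x 1 * x 2 + x 0 ^ 2 * x 1 ^ 2 + x 0 ^ 2 * y 1 + x 3 ^ 2 * y 0 + y 0 * y 3 + 4 * x 2 * x 3 * y 0 + x 2 ^ 2 * y 0 + y 0 * y 2 + 4 * x 1 * x 3 * y 0 + 4 * x 1 * x 2 * y 0 + x 1 ^ 2 * y 0 + y 0 * y 1)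

noncomputable def oc5 (c : ℝ) (x y : Fin 4 → ℝ) : ℝ :=
  c * ( - 2 * x 2 * x 3 ^ 2 - 2 * x 2 * y 3 - 2 * x 2 ^ 2 * x 3 - 2 * x 3 * y 2 - 2 * x 1 * x 3 ^ 2 - 2 * x 1 * y 3 - 8 * x 1 * x 2 * x 3 - 2 * x 1 * x 2 ^ 2 - 2 * x 1 * y 2 - 2 * x 1 ^ 2 * x 3 - 2 * x 1 ^ 2 * x 2 - 2 * x 3 * y 1 - 2 * x 2 * y 1 - 2 * x 0 * x 3 ^ 2 - 2 * x 0 * y 3 - 8 * x 0 * x 2 * x 3 - 2 * x 0 * x 2 ^ 2 - 2 * x 0 * y 2 - 8 * x 0 * x 1 * x 3 - 8 * x 0 * x 1 * x 2 - 2 * x 0 * x 1 ^ 2 - 2 * x 0 * y 1 - 2 * x 0 ^ 2 * x 3 - 2 * x 0 ^ 2 * x 2 - 2 * x 0 ^ 2 * x 1 - 2 * x 3 * y 0 - 2 * x 2 * y 0 - 2 * x 1 * y 0)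

noncomputable def oc6 (c : ℝ) (x y : Fin 4 → ℝ) : ℝ :=
  c * (x 3 ^ 2 + y 3 + 4 * x 2 * x 3 + x 2 ^ 2 + y 2 + 4 * x 1 * x 3 + 4 * x 1 * x 2 + x 1 ^ 2 + y 1 + 4 * x 0 * x 3 + 4 * x 0 * x 2 + 4 * x 0 * x 1 + x 0 ^ 2 + y 0)

noncomputable def oc7 (c : ℝ) (x y : Fin 4 → ℝ) : ℝ :=
  c * ( - 2 * x 3 - 2 * x 2 - 2 * x 1 - 2 * x 0)

noncomputable def oc8 (c : ℝ) (x y : Fin 4 → ℝ) : ℝ :=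
  c * (1)


noncomputable def octPoly (c : ℝ) (x y : Fin 4 → ℝ) : Polynomial ℝ :=
  C c * ∏ j : Fin 4, ((X - C (x j)) ^ 2 + C (y j))

noncomputable def octCoeff (c : ℝ) (x y : Fin 4 → ℝ) : Fin 9 → ℝ :=
![oc0 c x y, oc1 c x y, oc2 c x y, oc3 c x y, oc4 c x y, oc5 c x y, oc6 c x y, oc7 c x y, oc8 c x y]

lemma octPoly_evalR (c : ℝ) (x y : Fin 4 → ℝ) (t : ℝ) :
    (octPoly c x y).eval t = c * ∏ j : Fin 4, ((t - x j) ^ 2 + y j) := by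
  simp [octPoly, eval_prod]

lemma polyOf_octCoeff (c : ℝ) (x y : Fin 4 → ℝ) :
    polyOf (octCoeff c x y) = octPoly c x y := by
  apply Polynomial.funext
  intro t
  have hL : (polyOf (octCoeff c x y)).eval t = ∑ i : Fin 9, octCoeff c x y i * t ^ (i : ℕ) := by
    rw [polyOf, Polynomial.eval_finset_sum]
    simp
  rw [hL, octPoly_evalR, Fin.prod_univ_four, Fin.sum_univ_succ, Fin.sum_univ_succ,
    Fin.sum_univ_succ, Fin.sum_univ_succ, Fin.sum_univ_succ, Fin.sum_univ_succ, Fin.sum_univ_succ,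
    Fin.sum_univ_succ, Fin.sum_univ_one]
  have h0 : octCoeff c x y 0 = oc0 c x y := rfl
  have h1 : octCoeff c x y (Fin.succ 0) = oc1 c x y := rfl
  have h2 : octCoeff c x y (Fin.succ 0).succ = oc2 c x y := rfl
  have h3 : octCoeff c x y (Fin.succ 0).succ.succ = oc3 c x y := rfl
  have h4 : octCoeff c x y (Fin.succ 0).succ.succ.succ = oc4 c x y := rfl
  have h5 : octCoeff c x y (Fin.succ 0).succ.succ.succ.succ = oc5 c x y := rfl
  have h6 : octCoeff c x y (Fin.succ 0).succ.succ.succ.succ.succ = oc6 c x y := rfl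
  have h7 : octCoeff c x y (Fin.succ 0).succ.succ.succ.succ.succ.succ = oc7 c x y := rfl
  have h8 : octCoeff c x y (Fin.succ 0).succ.succ.succ.succ.succ.succ.succ = oc8 c x y := rfl
  rw [h0, h1, h2, h3, h4, h5, h6, h7, h8, oc0, oc1, oc2, oc3, oc4, oc5, oc6, oc7, oc8]
  simp only [Fin.val_succ, Fin.val_zero]
  ring



lemma quad_monic {K : Type*} [Field K] (r s : K) : ((X - C r) ^ 2 + C s).Monic := by
  have h2 : ((X - C r) ^ 2).Monic := (monic_X_sub_C r).pow 2
  apply h2.add_of_left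
  have : ((X - C r) ^ 2).degree = 2 := by
    rw [degree_pow, degree_X_sub_C]; rfl
  rw [this]
  exact (degree_C_le).trans_lt (by norm_num)

lemma quad_degree {K : Type*} [Field K] (r s : K) : ((X - C r) ^ 2 + C s).degree = 2 := by
  have h2 : ((X - C r) ^ 2).degree = 2 := by
    rw [degree_pow, degree_X_sub_C]; rfl
  rw [degree_add_eq_left_of_degree_lt, h2]
  rw [h2]
  exact (degree_C_le).trans_lt (by norm_num)

lemma octPoly_degree (c : ℝ) (hc : c ≠ 0) (x y : Fin 4 → ℝ) : (octPoly c x y).degree = 8 := by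
  rw [octPoly, degree_C_mul hc, degree_prod]
  simp only [quad_degree]
  rfl

noncomputable def zOf (x y : Fin 4 → ℝ) (j : Fin 4) : ℂ := ⟨x j, Real.sqrt (y j)⟩

lemma quad_map_factor (r s : ℝ) (hs : 0 ≤ s) :
    ((X - C r) ^ 2 + C s).map (algebraMap ℝ ℂ)
      = (X - C (⟨r, Real.sqrt s⟩ : ℂ)) * (X - C ((starRingEnd ℂ) (⟨r, Real.sqrt s⟩ : ℂ))) := by
  set z : ℂ := ⟨r, Real.sqrt s⟩ with hzdef
  have hprod : C z * C ((starRingEnd ℂ) z) = C ((r : ℂ)) ^ 2 + C ((s : ℂ)) := by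
    rw [← C_pow, ← C_mul, ← C_add]
    congr 1
    rw [Complex.mul_conj]
    have : Complex.normSq z = r * r + Real.sqrt s * Real.sqrt s := rfl
    rw [this, Real.mul_self_sqrt hs]
    push_cast
    ring
  have hsum : C z + C ((starRingEnd ℂ) z) = 2 * C ((r : ℂ)) := by
    rw [← C_add, Complex.add_conj]
    have : z.re = r := rfl
    rw [this]
    push_cast
    rw [map_mul, map_ofNat]
  rw [Polynomial.map_add, Polynomial.map_pow, Polynomial.map_sub, Polynomial.map_X, map_C, map_C]
  have : algebraMap ℝ ℂ r = (r : ℂ) := rfl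
  rw [this]
  have : algebraMap ℝ ℂ s = (s : ℂ) := rfl
  rw [this]
  linear_combination X * hsum - hprod

lemma octPoly_map (c : ℝ) (x y : Fin 4 → ℝ) (hy : ∀ j, 0 ≤ y j) :
    (octPoly c x y).map (algebraMap ℝ ℂ)
      = C ((c : ℂ)) * ∏ j : Fin 4,
          ((X - C (zOf x y j)) * (X - C ((starRingEnd ℂ) (zOf x y j)))) := by
  rw [octPoly, Polynomial.map_mul, Polynomial.map_prod, map_C]
  have : algebraMap ℝ ℂ c = (c : ℂ) := rfl
  rw [this]
  refine congrArg (fun q => C (c : ℂ) * q) ?_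
  apply Finset.prod_congr rfl
  intro j _
  exact quad_map_factor (x j) (y j) (hy j)

lemma zOf_im (x y : Fin 4 → ℝ) (hy : ∀ j, 0 < y j) (j : Fin 4) : 0 < (zOf x y j).im :=
  Real.sqrt_pos.mpr (hy j)

lemma zOf_inj (x y : Fin 4 → ℝ) (hy : ∀ j, 0 < y j)
    (hd : ∀ j k, j ≠ k → (x j, y j) ≠ (x k, y k)) : Function.Injective (zOf x y) := by
  intro j k h
  by_contra hjk
  apply hd j k hjk
  have hre : x j = x k := congrArg Complex.re h
  have him : Real.sqrt (y j) = Real.sqrt (y k) := congrArg Complex.im h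
  have : y j = y k := by
    have := congrArg (· ^ 2) him
    simpa [Real.sq_sqrt (hy j).le, Real.sq_sqrt (hy k).le] using this
  rw [hre, this]

lemma octPoly_map_squarefree (c : ℝ) (hc : c ≠ 0) (x y : Fin 4 → ℝ) (hy : ∀ j, 0 < y j)
    (hd : ∀ j k, j ≠ k → (x j, y j) ≠ (x k, y k)) :
    Squarefree ((octPoly c x y).map (algebraMap ℝ ℂ)) := by
  rw [octPoly_map c x y (fun j => (hy j).le)]
  rw [squarefree_mul_iff]
  have hu : IsUnit (C ((c : ℂ))) := by
    rw [Polynomial.isUnit_C]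
    exact isUnit_iff_ne_zero.mpr (by exact_mod_cast hc)
  refine ⟨hu.isRelPrime_left, hu.squarefree, ?_⟩
  set f : Fin 4 × Bool → ℂ := fun p => if p.2 then (starRingEnd ℂ) (zOf x y p.1) else zOf x y p.1
    with hf
  have hprod : (∏ j : Fin 4, ((X - C (zOf x y j)) * (X - C ((starRingEnd ℂ) (zOf x y j)))))
      = ∏ p : Fin 4 × Bool, (X - C (f p)) := by
    rw [Fintype.prod_prod_type]
    apply Finset.prod_congr rfl
    intro j _
    rw [Fintype.prod_bool]
    simp [hf, mul_comm]
  rw [hprod]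
  apply Polynomial.Separable.squarefree
  rw [Polynomial.separable_prod_X_sub_C_iff]
  intro ⟨j, b⟩ ⟨k, b'⟩ h
  simp only [hf] at h
  have him := zOf_im x y hy
  cases b <;> cases b' <;> simp only [if_true, if_false, Bool.false_eq_true] at h
  · rw [(zOf_inj x y hy hd) h]
  · exfalso
    have := congrArg Complex.im h
    simp only [Complex.conj_im] at this
    nlinarith [him j, him k]
  · exfalso
    have := congrArg Complex.im h
    simp only [Complex.conj_im] at this
    nlinarith [him j, him k]
  · have := (starRingEnd ℂ).injective h
    rw [(zOf_inj x y hy hd) this]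

lemma octPoly_eval (c : ℝ) (x y : Fin 4 → ℝ) (t : ℝ) :
    (octPoly c x y).eval t = c * ∏ j : Fin 4, ((t - x j) ^ 2 + y j) := by
  simp [octPoly, eval_prod]

lemma octPoly_eval_pos (c : ℝ) (hc : 0 < c) (x y : Fin 4 → ℝ) (hy : ∀ j, 0 < y j) (t : ℝ) :
    0 < (octPoly c x y).eval t := by
  rw [octPoly_eval]
  apply mul_pos hc
  apply Finset.prod_pos
  intro j _
  nlinarith [sq_nonneg (t - x j), hy j]


lemma conj_comp_algebraMap :
    (starRingEnd ℂ).comp (algebraMap ℝ ℂ) = algebraMap ℝ ℂ := by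
  ext r
  exact Complex.conj_ofReal r

lemma eval_map_conj (g : Polynomial ℝ) (z : ℂ) :
    (g.map (algebraMap ℝ ℂ)).eval ((starRingEnd ℂ) z)
      = (starRingEnd ℂ) ((g.map (algebraMap ℝ ℂ)).eval z) := by
  rw [eval_map, eval_map, hom_eval₂, conj_comp_algebraMap]

lemma exists_octCoeff_eq (a : Fin 9 → ℝ)
    (hdeg : (polyOf a).degree = 8)
    (hsq : Squarefree ((polyOf a).map (algebraMap ℝ ℂ)))
    (hpos : ∀ t : ℝ, 0 < (polyOf a).eval t) :
    ∃ (c : ℝ) (x y : Fin 4 → ℝ), 0 < c ∧ (∀ j, 0 < y j) ∧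
      (∀ j k, j ≠ k → (x j, y j) ≠ (x k, y k)) ∧ octCoeff c x y = a := by
  classical
  set g := polyOf a with hg
  set G := g.map (algebraMap ℝ ℂ) with hG
  have hg0 : g ≠ 0 := fun h => by simp [h] at hdeg
  have hG0 : G ≠ 0 := by
    rw [hG]
    exact (Polynomial.map_ne_zero_iff (algebraMap ℝ ℂ).injective).mpr hg0
  have hGdeg : G.degree = 8 := by rw [hG, degree_map]; exact hdeg
  have hGnat : G.natDegree = 8 := natDegree_eq_of_degree_eq_some hGdeg
  have hsplits : G.Splits := IsAlgClosed.splits G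
  have hcard : Multiset.card G.roots = 8 := by
    rw [splits_iff_card_roots.mp hsplits, hGnat]
  have hnodup : G.roots.Nodup :=
    (nodup_roots_iff_of_splits hG0 hsplits).mpr (PerfectField.separable_iff_squarefree.mpr hsq)
  -- roots are closed under conjugation and have nonzero imaginary part
  have hconj : ∀ z ∈ G.roots, (starRingEnd ℂ) z ∈ G.roots := by
    intro z hz
    rw [mem_roots hG0] at hz ⊢
    rw [IsRoot, eval_map_conj, hz]
    exact map_zero _
  have him : ∀ z ∈ G.roots, z.im ≠ 0 := by
    intro z hz h0
    have hzre : ((z.re : ℝ) : ℂ) = z := by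
      apply Complex.ext <;> simp [h0]
    have : G.eval z = ((g.eval z.re : ℝ) : ℂ) := by
      rw [← hzre, hG, eval_map]
      exact eval₂_at_apply (algebraMap ℝ ℂ) z.re
    rw [mem_roots hG0] at hz
    rw [IsRoot, this] at hz
    exact (hpos z.re).ne' (by exact_mod_cast hz)
  set S : Finset ℂ := G.roots.toFinset with hS
  have hSval : S.val = G.roots := Multiset.dedup_eq_self.mpr hnodup
  have hScard : S.card = 8 := by rw [Multiset.toFinset_card_of_nodup hnodup, hcard]
  set Sp : Finset ℂ := S.filter (fun z => 0 < z.im) with hSp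
  set Sm : Finset ℂ := S.filter (fun z => z.im < 0) with hSm
  have hmemS : ∀ z, z ∈ S ↔ z ∈ G.roots := by
    intro z; rw [hS, Multiset.mem_toFinset]
  have hSconj : ∀ z, z ∈ S → (starRingEnd ℂ) z ∈ S := by
    intro z hz; rw [hmemS] at hz ⊢; exact hconj z hz
  have hSmimg : Sm = Sp.image (starRingEnd ℂ) := by
    ext w
    simp only [hSm, hSp, Finset.mem_filter, Finset.mem_image]
    constructor
    · rintro ⟨hw, hwim⟩
      refine ⟨(starRingEnd ℂ) w, ⟨hSconj w hw, ?_⟩, ?_⟩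
      · simpa using neg_pos.mpr hwim
      · simp
    · rintro ⟨z, ⟨hz, hzim⟩, rfl⟩
      exact ⟨hSconj z hz, by simp [Complex.conj_im]; linarith⟩
  have hdisj : Disjoint Sp Sm := by
    rw [Finset.disjoint_left]
    intro z hz hz'
    rw [hSp, Finset.mem_filter] at hz
    rw [hSm, Finset.mem_filter] at hz'
    linarith [hz.2, hz'.2]
  have hunion : S = Sp ∪ Sm := by
    ext z
    simp only [hSp, hSm, Finset.mem_union, Finset.mem_filter]
    constructor
    · intro hz
      rcases lt_trichotomy z.im 0 with h | h | h
      · exact Or.inr ⟨hz, h⟩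
      · exact absurd h (him z ((hmemS z).mp hz))
      · exact Or.inl ⟨hz, h⟩
    · rintro (⟨hz, _⟩ | ⟨hz, _⟩) <;> exact hz
  have hcardSp : Sp.card = 4 := by
    have h1 : S.card = Sp.card + Sm.card := by
      rw [hunion]; exact Finset.card_union_of_disjoint hdisj
    have h2 : Sm.card = Sp.card := by
      rw [hSmimg]
      exact Finset.card_image_of_injective _ (starRingEnd ℂ).injective
    omega
  set e := Finset.equivFinOfCardEq hcardSp with he
  set z : Fin 4 → ℂ := fun j => (e.symm j : ℂ) with hz
  have hzmem : ∀ j, z j ∈ Sp := fun j => (e.symm j).2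
  have hzim : ∀ j, 0 < (z j).im := by
    intro j
    have := hzmem j
    rw [hSp, Finset.mem_filter] at this
    exact this.2
  have hzinj : Function.Injective z := by
    intro j k h
    have : e.symm j = e.symm k := Subtype.ext h
    exact e.symm.injective this
  set x : Fin 4 → ℝ := fun j => (z j).re with hx
  set y : Fin 4 → ℝ := fun j => (z j).im ^ 2 with hy
  have hypos : ∀ j, 0 < y j := fun j => pow_pos (hzim j) 2
  have hzOf : zOf x y = z := by
    funext j
    apply Complex.ext
    · rfl
    · show Real.sqrt ((z j).im ^ 2) = (z j).im
      rw [Real.sqrt_sq (hzim j).le]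
  have hpairs : ∀ j k, j ≠ k → (x j, y j) ≠ (x k, y k) := by
    intro j k hjk h
    apply hjk
    apply hzinj
    have h1 : x j = x k := (Prod.ext_iff.mp h).1
    have h2 : y j = y k := (Prod.ext_iff.mp h).2
    apply Complex.ext
    · exact h1
    · have := congrArg Real.sqrt h2
      rwa [hy, Real.sqrt_sq (hzim j).le, Real.sqrt_sq (hzim k).le] at this
  -- leading coefficient
  set c : ℝ := a 8 with hc
  have hlead : g.leadingCoeff = c := polyOf_leadingCoeff a hdeg
  have hcpos : 0 < c := by
    by_contra hle
    push_neg at hle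
    have := Polynomial.tendsto_atBot_of_leadingCoeff_nonpos g
      (by rw [hdeg]; norm_num) (by rw [hlead]; exact hle)
    obtain ⟨t, ht⟩ := (this.eventually (Filter.eventually_lt_atBot 0)).exists
    exact absurd (hpos t) (not_lt.mpr ht.le)
  refine ⟨c, x, y, hcpos, hypos, hpairs, ?_⟩
  apply polyOf_injective
  rw [polyOf_octCoeff, ← hg]
  apply Polynomial.map_injective (algebraMap ℝ ℂ) (algebraMap ℝ ℂ).injective
  rw [octPoly_map c x y (fun j => (hypos j).le), hzOf, ← hG]
  have hGfact : G = C G.leadingCoeff * (G.roots.map fun w => X - C w).prod :=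
    hsplits.eq_prod_roots
  have hGlead : G.leadingCoeff = (c : ℂ) := by
    rw [hG, leadingCoeff_map, hlead]; rfl
  rw [hGfact, hGlead]
  congr 1
  -- the product over roots equals the paired product
  have hrootsprod : (G.roots.map fun w => X - C w).prod = ∏ w ∈ S, (X - C w) := by
    rw [Finset.prod, hSval]
  rw [hrootsprod, hunion, Finset.prod_union hdisj, hSmimg,
    Finset.prod_image (fun u _ v _ h => (starRingEnd ℂ).injective h), ← Finset.prod_mul_distrib]
  rw [← Finset.prod_coe_sort Sp]
  rw [← Equiv.prod_comp e.symm (fun w : Sp => (X - C (w : ℂ)) * (X - C ((starRingEnd ℂ) (w : ℂ))))]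

abbrev PSpace := ℝ × (Fin 4 → ℝ) × (Fin 4 → ℝ)

def ParamSet : Set PSpace :=
  {p | 0 < p.1 ∧ (∀ j, 0 < p.2.2 j) ∧
    ∀ j k, j ≠ k → (p.2.1 j, p.2.2 j) ≠ (p.2.1 k, p.2.2 k)}

/-- straight segments give joins -/
lemma segment_joinedIn {s : Set PSpace} {c₁ c₂ : ℝ} {x₁ x₂ y₁ y₂ : Fin 4 → ℝ}
    (h : ∀ t : ℝ, 0 ≤ t → t ≤ 1 →
      (((1-t)*c₁ + t*c₂ : ℝ), (fun j => (1-t)*x₁ j + t*x₂ j), (fun j => (1-t)*y₁ j + t*y₂ j)) ∈ s) :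
    JoinedIn s (c₁, x₁, y₁) (c₂, x₂, y₂) := by
  refine ⟨⟨⟨fun t => (((1-(t:ℝ))*c₁ + (t:ℝ)*c₂ : ℝ),
      (fun j => (1-(t:ℝ))*x₁ j + (t:ℝ)*x₂ j), (fun j => (1-(t:ℝ))*y₁ j + (t:ℝ)*y₂ j)), ?_⟩,
      ?_, ?_⟩, ?_⟩
  · fun_prop
  · ext <;> simp
  · ext <;> simp
  · intro t
    exact h t t.2.1 t.2.2

lemma comb_pos {a b t : ℝ} (ha : 0 < a) (hb : 0 < b) (ht1 : t ≤ 1) (ht0 : 0 ≤ t) :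
    0 < (1-t)*a + t*b := by
  rcases eq_or_lt_of_le ht1 with h | h
  · rw [h]; ring_nf; linarith
  · have h1 : 0 < (1-t)*a := mul_pos (by linarith) ha
    nlinarith [mul_nonneg ht0 hb.le]

lemma comb_strict {u v a b t : ℝ} (hu : u < v) (ha : a < b) (ht0 : 0 ≤ t) (ht1 : t ≤ 1) :
    (1-t)*u + t*a < (1-t)*v + t*b := by
  rcases eq_or_lt_of_le ht0 with h | h
  · rw [← h]; ring_nf; linarith
  · nlinarith [mul_lt_mul_of_pos_left ha h, mul_le_mul_of_nonneg_left hu.le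
      (by linarith : (0:ℝ) ≤ 1-t)]

lemma const_comb (t : ℝ) (x : Fin 4 → ℝ) : (fun j => (1-t)*x j + t*x j) = x := by
  funext j; ring

lemma mem_paramSet (c : ℝ) (x y : Fin 4 → ℝ) (hc : 0 < c) (hy : ∀ j, 0 < y j)
    (hd : ∀ j k, j ≠ k → (x j, y j) ≠ (x k, y k)) : ((c, x, y) : PSpace) ∈ ParamSet :=
  ⟨hc, hy, hd⟩

lemma join_to_normal (p : PSpace) (hp : p ∈ ParamSet) :
    ∃ q ∈ ParamSet, JoinedIn ParamSet p q ∧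
      octCoeff q.1 q.2.1 q.2.2 = octCoeff 1 (fun j => (j : ℝ) + 1) (fun _ => 1) := by
  obtain ⟨c, x, y⟩ := p
  obtain ⟨hc, hy, hd⟩ := hp
  simp only at hc hy hd
  -- Step 1 : scale the constant to 1
  have step1 : JoinedIn ParamSet (c, x, y) (1, x, y) := by
    apply segment_joinedIn
    intro t ht0 ht1
    rw [const_comb, const_comb]
    exact mem_paramSet _ x y (comb_pos hc one_pos ht1 ht0) hy hd
  -- Step 2 : shear to make the x-coordinates distinct
  obtain ⟨l, hl⟩ := Infinite.exists_notMem_finset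
    ((Finset.univ : Finset (Fin 4 × Fin 4)).image
      (fun jk => (x jk.2 - x jk.1) / (y jk.1 - y jk.2)))
  set x' : Fin 4 → ℝ := fun j => x j + l * y j with hx'
  have hx'inj : Function.Injective x' := by
    intro j k h
    by_contra hjk
    rcases eq_or_ne (y j) (y k) with hyy | hyy
    · apply hd j k hjk
      rw [hx'] at h
      dsimp at h
      rw [hyy] at h ⊢
      have : x j = x k := by linarith
      rw [this]
    · apply hl
      rw [Finset.mem_image]
      refine ⟨(j, k), Finset.mem_univ _, ?_⟩
      rw [hx'] at h
      dsimp at h ⊢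
      rw [div_eq_iff (sub_ne_zero.mpr hyy)]
      linarith
  have step2 : JoinedIn ParamSet (1, x, y) (1, x', y) := by
    apply segment_joinedIn
    intro t ht0 ht1
    rw [const_comb]
    have : (fun j => (1-t)*x j + t*x' j) = fun j => x j + (t*l) * y j := by
      funext j; rw [hx']; ring
    rw [this]
    refine mem_paramSet _ _ y (by norm_num) hy ?_
    intro j k hjk hcon
    rcases eq_or_ne (y j) (y k) with hyy | hyy
    · apply hd j k hjk
      have h1 := (Prod.ext_iff.mp hcon).1
      dsimp at h1
      rw [hyy] at h1 ⊢
      have : x j = x k := by linarith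
      rw [this]
    · exact hyy ((Prod.ext_iff.mp hcon).2)
  -- Step 3 : normalize the y-coordinates to 1
  have step3 : JoinedIn ParamSet (1, x', y) (1, x', fun _ => 1) := by
    apply segment_joinedIn
    intro t ht0 ht1
    rw [const_comb]
    refine mem_paramSet _ x' _ (by norm_num) (fun j => comb_pos (hy j) one_pos ht1 ht0) ?_
    intro j k hjk hcon
    exact hjk (hx'inj ((Prod.ext_iff.mp hcon).1))
  -- Step 4 : move the x-coordinates to their ranks
  set r : Fin 4 → ℕ := fun j => (Finset.univ.filter (fun k => x' k < x' j)).card with hr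
  have hrlt : ∀ j k, x' j < x' k → r j < r k := by
    intro j k h
    apply Finset.card_lt_card
    constructor
    · intro m hm
      rw [Finset.mem_filter] at hm ⊢
      exact ⟨hm.1, hm.2.trans h⟩
    · intro hsub
      have hj := hsub (Finset.mem_filter.mpr ⟨Finset.mem_univ j, h⟩)
      rw [Finset.mem_filter] at hj
      exact lt_irrefl _ hj.2
  have hrne : ∀ j k, j ≠ k → r j ≠ r k := by
    intro j k hjk
    rcases lt_or_gt_of_ne (fun h => hjk (hx'inj h) : x' j ≠ x' k) with h | h
    · exact (hrlt j k h).ne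
    · exact (hrlt k j h).ne'
  have hrbound : ∀ j, r j < 4 := by
    intro j
    have : (Finset.univ.filter (fun k => x' k < x' j)) ⊂ Finset.univ := by
      rw [Finset.ssubset_univ_iff]
      intro h
      have hmem : j ∈ Finset.univ.filter (fun k => x' k < x' j) := h.symm ▸ Finset.mem_univ j
      rw [Finset.mem_filter] at hmem
      exact lt_irrefl _ hmem.2
    have := Finset.card_lt_card this
    simpa using this
  set τ : Fin 4 → ℝ := fun j => (r j : ℝ) + 1 with hτ
  have hτlt : ∀ j k, x' j < x' k → τ j < τ k := by
    intro j k h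
    rw [hτ]
    dsimp
    have := hrlt j k h
    have : (r j : ℝ) < r k := by exact_mod_cast this
    linarith
  have step4 : JoinedIn ParamSet (1, x', fun _ => 1) (1, τ, fun _ => 1) := by
    apply segment_joinedIn
    intro t ht0 ht1
    rw [const_comb]
    refine mem_paramSet _ _ _ (by norm_num) (fun _ => one_pos) ?_
    intro j k hjk hcon
    have h1 := (Prod.ext_iff.mp hcon).1
    dsimp at h1
    rcases lt_or_gt_of_ne (fun h => hjk (hx'inj h) : x' j ≠ x' k) with h | h
    · exact absurd h1 (ne_of_lt (comb_strict h (hτlt j k h) ht0 ht1))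
    · exact absurd h1.symm (ne_of_lt (comb_strict h (hτlt k j h) ht0 ht1))
  refine ⟨(1, τ, fun _ => 1), ?_, ((step1.trans step2).trans step3).trans step4, ?_⟩
  · refine mem_paramSet _ _ _ one_pos (fun _ => one_pos) ?_
    intro j k hjk hcon
    have h1 := (Prod.ext_iff.mp hcon).1
    rw [hτ] at h1
    dsimp at h1
    have : r j = r k := by exact_mod_cast (by linarith : (r j : ℝ) = r k)
    exact hrne j k hjk this
  · -- the normalized endpoint has the same coefficients as the base point
    apply polyOf_injective
    rw [polyOf_octCoeff, polyOf_octCoeff, octPoly, octPoly]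
    refine congrArg (fun q => C (1 : ℝ) * q) ?_
    set e : Fin 4 → Fin 4 := fun j => ⟨r j, hrbound j⟩ with he
    have hebij : Function.Bijective e := by
      apply Finite.injective_iff_bijective.mp
      intro j k h
      by_contra hjk
      exact hrne j k hjk (congrArg Fin.val h)
    have := Function.Bijective.prod_comp hebij
      (fun k : Fin 4 => ((X - C ((k : ℝ) + 1)) ^ 2 + C 1 : Polynomial ℝ))
    rw [← this]

lemma oc0_cont : Continuous (fun p : PSpace => oc0 p.1 p.2.1 p.2.2) := by
  simp only [oc0]
  fun_prop

lemma oc1_cont : Continuous (fun p : PSpace => oc1 p.1 p.2.1 p.2.2) := by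
  simp only [oc1]
  fun_prop

lemma oc2_cont : Continuous (fun p : PSpace => oc2 p.1 p.2.1 p.2.2) := by
  simp only [oc2]
  fun_prop

lemma oc3_cont : Continuous (fun p : PSpace => oc3 p.1 p.2.1 p.2.2) := by
  simp only [oc3]
  fun_prop

lemma oc4_cont : Continuous (fun p : PSpace => oc4 p.1 p.2.1 p.2.2) := by
  simp only [oc4]
  fun_prop

lemma oc5_cont : Continuous (fun p : PSpace => oc5 p.1 p.2.1 p.2.2) := by
  simp only [oc5]
  fun_prop

lemma oc6_cont : Continuous (fun p : PSpace => oc6 p.1 p.2.1 p.2.2) := by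
  simp only [oc6]
  fun_prop

lemma oc7_cont : Continuous (fun p : PSpace => oc7 p.1 p.2.1 p.2.2) := by
  simp only [oc7]
  fun_prop

lemma oc8_cont : Continuous (fun p : PSpace => oc8 p.1 p.2.1 p.2.2) := by
  simp only [oc8]
  fun_prop

lemma octCoeff_continuous : Continuous (fun p : PSpace => octCoeff p.1 p.2.1 p.2.2) := by
  apply continuous_pi
  intro i
  fin_cases i
  · exact oc0_cont
  · exact oc1_cont
  · exact oc2_cont
  · exact oc3_cont
  · exact oc4_cont
  · exact oc5_cont
  · exact oc6_cont
  · exact oc7_cont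
  · exact oc8_cont

end Aux

section Aux2
open Polynomial Complex

lemma octCoeff_mem_Tplus (c : ℝ) (x y : Fin 4 → ℝ) (hc : 0 < c) (hy : ∀ j, 0 < y j)
    (hd : ∀ j k, j ≠ k → (x j, y j) ≠ (x k, y k)) : octCoeff c x y ∈ Tplus := by
  have hposev : ∀ t : ℝ, 0 < (polyOf (octCoeff c x y)).eval t := by
    intro t
    rw [polyOf_octCoeff]
    exact octPoly_eval_pos c hc x y hy t
  refine ⟨⟨?_, ?_, fun t => (hposev t).ne'⟩, hposev⟩
  · rw [polyOf_octCoeff]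
    exact octPoly_degree c hc.ne' x y
  · rw [polyOf_octCoeff]
    exact octPoly_map_squarefree c hc.ne' x y hy hd

noncomputable def basePt : Fin 9 → ℝ := octCoeff 1 (fun j => (j : ℝ) + 1) (fun _ => 1)

lemma base_pairs : ∀ j k : Fin 4, j ≠ k →
    (((j : ℝ) + 1, (1:ℝ)) : ℝ × ℝ) ≠ ((k : ℝ) + 1, 1) := by
  intro j k hjk hcon
  apply hjk
  have h1 := (Prod.ext_iff.mp hcon).1
  simp only at h1
  have : (j : ℕ) = (k : ℕ) := by exact_mod_cast (by linarith : ((j:ℕ) : ℝ) = ((k:ℕ) : ℝ))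
  exact Fin.ext this

lemma basePt_mem : basePt ∈ Tplus :=
  octCoeff_mem_Tplus _ _ _ one_pos (fun _ => one_pos) base_pairs

lemma Tplus_pathConnected : IsPathConnected Tplus := by
  refine ⟨basePt, basePt_mem, ?_⟩
  intro a ha
  obtain ⟨⟨hdeg, hsq, _hnr⟩, hpos⟩ := ha
  obtain ⟨c, x, y, hc, hy, hd, heq⟩ := exists_octCoeff_eq a hdeg hsq hpos
  obtain ⟨q, hq, hjoin, hqcoeff⟩ := join_to_normal (c, x, y) ⟨hc, hy, hd⟩
  have hmap := hjoin.map (f := fun p : PSpace => octCoeff p.1 p.2.1 p.2.2) octCoeff_continuous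
  have hsub : (fun p : PSpace => octCoeff p.1 p.2.1 p.2.2) '' ParamSet ⊆ Tplus := by
    rintro _ ⟨p, hp, rfl⟩
    exact octCoeff_mem_Tplus _ _ _ hp.1 hp.2.1 hp.2.2
  have := (hmap.mono hsub)
  simp only at this
  rw [heq, hqcoeff] at this
  exact this.symm

lemma polyOf_neg (a : Fin 9 → ℝ) : polyOf (-a) = -(polyOf a) := by
  simp only [polyOf, Pi.neg_apply, map_neg, neg_mul, Finset.sum_neg_distrib]

lemma squarefree_neg_poly {G : Polynomial ℂ} (h : Squarefree G) : Squarefree (-G) := by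
  rw [← neg_one_mul]
  rw [squarefree_mul_iff]
  have hu : IsUnit (-1 : Polynomial ℂ) := IsUnit.neg isUnit_one
  exact ⟨hu.isRelPrime_left, hu.squarefree, h⟩

lemma neg_mem_Tset {a : Fin 9 → ℝ} (ha : a ∈ Tset) : -a ∈ Tset := by
  obtain ⟨hdeg, hsq, hnr⟩ := ha
  refine ⟨?_, ?_, ?_⟩
  · rw [polyOf_neg, degree_neg]; exact hdeg
  · rw [polyOf_neg, Polynomial.map_neg]
    exact squarefree_neg_poly hsq
  · intro t
    rw [polyOf_neg, eval_neg]
    simpa using hnr t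
lemma neg_mem_Tminus {a : Fin 9 → ℝ} (ha : a ∈ Tplus) : -a ∈ Tminus := by
  refine ⟨neg_mem_Tset ha.1, fun t => ?_⟩
  rw [polyOf_neg, eval_neg]
  simpa using ha.2 t

lemma neg_mem_Tplus {a : Fin 9 → ℝ} (ha : a ∈ Tminus) : -a ∈ Tplus := by
  refine ⟨neg_mem_Tset ha.1, fun t => ?_⟩
  rw [polyOf_neg, eval_neg]
  simpa using ha.2 t

lemma Tminus_eq_image : Tminus = (fun a : Fin 9 → ℝ => -a) '' Tplus := by
  ext b
  constructor
  · intro hb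
    exact ⟨-b, neg_mem_Tplus hb, by simp⟩
  · rintro ⟨a, ha, rfl⟩
    exact neg_mem_Tminus ha

lemma Tminus_pathConnected : IsPathConnected Tminus := by
  rw [Tminus_eq_image]
  exact Tplus_pathConnected.image (continuous_neg)

end Aux2

/-- `T = T⁺ ∪ T⁻` with `T⁺ ∩ T⁻ = ∅`; `T⁺` and `T⁻` are nonempty and
path-connected; and no continuous path inside `T` joins a point of `T⁺` to a point of
`T⁻`.  Hence `T` (the space of smooth real binary octic forms of type 4) has exactly
two path components. -/
theorem stmt18 :
    Tset = Tplus ∪ Tminus ∧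
    Tplus ∩ Tminus = ∅ ∧
    Tplus.Nonempty ∧ Tminus.Nonempty ∧
    IsPathConnected Tplus ∧ IsPathConnected Tminus ∧
    ∀ a ∈ Tplus, ∀ b ∈ Tminus, ∀ γ : Path a b, ∃ t : unitInterval, γ t ∉ Tset := by
  have hunion : Tset = Tplus ∪ Tminus := by
    ext a
    constructor
    · intro ha
      by_cases hp : ∀ t : ℝ, 0 < (polyOf a).eval t
      · exact Or.inl ⟨ha, hp⟩
      · push_neg at hp
        obtain ⟨u, hu⟩ := hp
        have hu' : (polyOf a).eval u < 0 := lt_of_le_of_ne hu (ha.2.2 u)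
        refine Or.inr ⟨ha, fun v => ?_⟩
        by_contra hv
        push_neg at hv
        have hv' : 0 < (polyOf a).eval v := lt_of_le_of_ne hv (Ne.symm (ha.2.2 v))
        obtain ⟨w, hw⟩ := intermediate_value_univ u v (polyOf a).continuous ⟨hu'.le, hv'.le⟩
        exact ha.2.2 w hw
    · rintro (h | h) <;> exact h.1
  have hdisj : Tplus ∩ Tminus = ∅ := by
    rw [Set.eq_empty_iff_forall_notMem]
    rintro a ⟨hp, hm⟩
    have h1 := hp.2 0
    have h2 := hm.2 0
    linarith
  refine ⟨hunion, hdisj, ⟨basePt, basePt_mem⟩, ⟨-basePt, neg_mem_Tminus basePt_mem⟩,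
    Tplus_pathConnected, Tminus_pathConnected, ?_⟩
  intro a ha b hb γ
  by_contra hcon
  push_neg at hcon
  have hf : Continuous fun t : unitInterval => γ t 0 := by fun_prop
  have hb0 : (γ (1:unitInterval)) 0 < 0 := by
    rw [γ.target]
    have := hb.2 0
    rwa [polyOf_eval_zero] at this
  have ha0 : 0 < (γ (0:unitInterval)) 0 := by
    rw [γ.source]
    have := ha.2 0
    rwa [polyOf_eval_zero] at this
  obtain ⟨t, ht⟩ := intermediate_value_univ (1:unitInterval) (0:unitInterval) hf ⟨hb0.le, ha0.le⟩
  exact (hcon t).2.2 0 (by rw [polyOf_eval_zero]; exact ht)
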